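/- In F₀, the elements x_{k,0} = (Q^0)^k and x_{k,i} = (Q^0)^{k−i} Q^1 (Q^0)^{i−1} for 1 ≤ i ≤ k are primitive in the component F₀[k] (with unit (Q^0)^k), i.e. ψ(x_{k,i}) = x_{k,i} ⊗ (Q^0)^k + (Q^0)^k ⊗ x_{k,i}. Moreover {x_{k,i} : 1 ≤ i ≤ k} is an 𝔽₂-basis for the primitive elements of the component coalgebra F₀[k]. -/

import Mathlib

open scoped TensorProduct

noncomputable section

abbrev F0 : Type := FreeAlgebra (ZMod 2) ℕ

def Q (i : ℕ) : F0 := FreeAlgebra.ι (ZMod 2) i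

def QI (I : List ℕ) : F0 := (I.map Q).prod

/-- The coproduct of `F₀`, `ψ(Q^i) = Σ_t Q^{i−t} ⊗ Q^t`. -/
def psi : F0 →ₐ[ZMod 2] F0 ⊗[ZMod 2] F0 :=
  FreeAlgebra.lift (ZMod 2) fun i => ∑ t ∈ Finset.range (i + 1), Q (i - t) ⊗ₜ[ZMod 2] Q t

/-- `F₀[k]` : the span of the monomials of length `k`. -/
def Fk (k : ℕ) : Submodule (ZMod 2) F0 :=
  Submodule.span (ZMod 2) {z | ∃ I : List ℕ, I.length = k ∧ z = QI I}

/-- `x_{k,0} = (Q^0)^k`, the grouplike element of `F₀[k]`. -/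
def g0 (k : ℕ) : F0 := QI (List.replicate k 0)

/-- `x_{k,i} = (Q^0)^{k−i} Q^1 (Q^0)^{i−1}` for `1 ≤ i ≤ k`. -/
def x (k i : ℕ) : F0 := QI (List.replicate (k - i) 0 ++ 1 :: List.replicate (i - 1) 0)

@[simp] lemma QI_nil : QI [] = 1 := rfl
@[simp] lemma QI_cons (i : ℕ) (I : List ℕ) : QI (i :: I) = Q i * QI I := by simp [QI]
lemma QI_append (I J : List ℕ) : QI (I ++ J) = QI I * QI J := by simp [QI]
@[simp] lemma psi_Q (i : ℕ) :
    psi (Q i) = ∑ t ∈ Finset.range (i + 1), Q (i - t) ⊗ₜ[ZMod 2] Q t := by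
  simp [psi, Q]
lemma psi_Q0 : psi (Q 0) = Q 0 ⊗ₜ[ZMod 2] Q 0 := by simp
lemma psi_Q1 : psi (Q 1) = Q 1 ⊗ₜ[ZMod 2] Q 0 + Q 0 ⊗ₜ[ZMod 2] Q 1 := by
  rw [psi_Q, Finset.sum_range_succ, Finset.sum_range_one]

lemma psi_rep (a : ℕ) :
    psi (QI (List.replicate a 0)) =
      QI (List.replicate a 0) ⊗ₜ[ZMod 2] QI (List.replicate a 0) := by
  induction a with
  | zero => simp [Algebra.TensorProduct.one_def]
  | succ n ih =>
    rw [List.replicate_succ, QI_cons, map_mul, psi_Q0, ih,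
      Algebra.TensorProduct.tmul_mul_tmul]

lemma part1 (k i : ℕ) (h1 : 1 ≤ i) (h2 : i ≤ k) :
    psi (x k i) = x k i ⊗ₜ[ZMod 2] g0 k + g0 k ⊗ₜ[ZMod 2] x k i := by
  have hx : x k i = QI (List.replicate (k - i) 0) * (Q 1 * QI (List.replicate (i-1) 0)) := by
    rw [x, QI_append, QI_cons]
  have hg : g0 k = QI (List.replicate (k - i) 0) * (Q 0 * QI (List.replicate (i-1) 0)) := by
    rw [g0, ← QI_cons, ← QI_append, ← List.replicate_succ]
    congr 1
    rw [← List.replicate_add]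
    congr 1
    omega
  rw [hg, hx, map_mul, map_mul, psi_rep, psi_rep, psi_Q1, add_mul, mul_add,
    Algebra.TensorProduct.tmul_mul_tmul, Algebra.TensorProduct.tmul_mul_tmul,
    Algebra.TensorProduct.tmul_mul_tmul, Algebra.TensorProduct.tmul_mul_tmul]

def splits : List ℕ → Finset (List ℕ × List ℕ)
  | [] => {([], [])}
  | i :: I => (Finset.range (i+1) ×ˢ splits I).image
      fun p => ((i - p.1) :: p.2.1, p.1 :: p.2.2)

lemma psi_QI (I : List ℕ) :
    psi (QI I) = ∑ p ∈ splits I, QI p.1 ⊗ₜ[ZMod 2] QI p.2 := by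
  induction I with
  | nil => simp [splits, Algebra.TensorProduct.one_def]
  | cons i I ih =>
    rw [QI_cons, map_mul, psi_Q, ih, Finset.sum_mul_sum, splits]
    rw [Finset.sum_image]
    · rw [Finset.sum_product]
      refine Finset.sum_congr rfl fun t ht => Finset.sum_congr rfl fun p hp => ?_
      rw [Algebra.TensorProduct.tmul_mul_tmul, QI_cons, QI_cons]
    · rintro ⟨t, J, T⟩ h ⟨t', J', T'⟩ h' heq
      simp only [Prod.mk.injEq, List.cons.injEq] at heq
      obtain ⟨⟨-, h2⟩, h3, h4⟩ := heq
      subst h2; subst h3; subst h4; rfl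

lemma mem_splits {I J T : List ℕ} :
    (J, T) ∈ splits I ↔
      J.length = I.length ∧ T.length = I.length ∧ I = List.zipWith (· + ·) J T := by
  induction I generalizing J T with
  | nil =>
    constructor
    · intro h
      simp only [splits, Finset.mem_singleton, Prod.mk.injEq] at h
      obtain ⟨rfl, rfl⟩ := h
      simp
    · rintro ⟨hJ, hT, -⟩
      simp only [List.length_nil, List.length_eq_zero_iff] at hJ hT
      subst hJ; subst hT; simp [splits]
  | cons i I ih =>
    constructor
    · intro h
      simp only [splits, Finset.mem_image] at h
      obtain ⟨⟨t, J', T'⟩, hmem, heq⟩ := h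
      rw [Finset.mem_product] at hmem
      obtain ⟨ht, hm⟩ := hmem
      rw [Finset.mem_range] at ht
      obtain ⟨h1, h2, h3⟩ := ih.mp hm
      injection heq with e1 e2
      subst e1; subst e2
      refine ⟨by simp [h1], by simp [h2], ?_⟩
      simp only [List.zipWith_cons_cons, ← h3]
      congr 1
      omega
    · rintro ⟨hJ, hT, h⟩
      cases J with
      | nil => simp at hJ
      | cons a J' =>
        cases T with
        | nil => simp at hT
        | cons t T' =>
          simp only [List.zipWith_cons_cons, List.cons.injEq] at h
          simp only [splits, Finset.mem_image]
          refine ⟨(t, (J', T')), ?_, ?_⟩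
          · rw [Finset.mem_product, Finset.mem_range]
            exact ⟨by omega, ih.mpr ⟨by simpa using hJ, by simpa using hT, h.2⟩⟩
          · have : i - t = a := by omega
            rw [this]

def B : Module.Basis (FreeMonoid ℕ) (ZMod 2) F0 := FreeAlgebra.basisFreeMonoid (ZMod 2) ℕ

lemma B_apply (I : List ℕ) : B (FreeMonoid.ofList I) = QI I := by
  induction I with
  | nil =>
    show B 1 = 1
    simp only [B, FreeAlgebra.basisFreeMonoid, Finsupp.basisSingleOne, Module.Basis.map_apply,
      Module.Basis.coe_ofRepr, LinearEquiv.refl_symm, LinearEquiv.refl_apply]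
    show (FreeAlgebra.equivMonoidAlgebraFreeMonoid (R := ZMod 2) (X := ℕ)).symm
      (MonoidAlgebra.single (1 : FreeMonoid ℕ) (1 : ZMod 2)) = 1
    have : (MonoidAlgebra.single (1 : FreeMonoid ℕ) (1 : ZMod 2)) =
        (1 : MonoidAlgebra (ZMod 2) (FreeMonoid ℕ)) := rfl
    rw [this, map_one]
  | cons i I ih =>
    have h1 : FreeMonoid.ofList (i :: I) = FreeMonoid.of i * FreeMonoid.ofList I := rfl
    have hB : ∀ m : FreeMonoid ℕ, B m =
        (FreeAlgebra.equivMonoidAlgebraFreeMonoid (R := ZMod 2) (X := ℕ)).symm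
          (MonoidAlgebra.single m 1) := by
      intro m
      simp only [B, FreeAlgebra.basisFreeMonoid, Finsupp.basisSingleOne, Module.Basis.map_apply,
        Module.Basis.coe_ofRepr, LinearEquiv.refl_symm, LinearEquiv.refl_apply]
      rfl
    have hs := MonoidAlgebra.single_mul_single (m₁ := FreeMonoid.of i) (r₁ := (1:ZMod 2))
      (m₂ := FreeMonoid.ofList I) (r₂ := 1)
    rw [one_mul] at hs
    have hQ : (FreeAlgebra.equivMonoidAlgebraFreeMonoid (R := ZMod 2) (X := ℕ)).symm
        (MonoidAlgebra.single (FreeMonoid.of i) 1) = Q i := by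
      rw [show (MonoidAlgebra.single (FreeMonoid.of i) (1:ZMod 2)) =
        FreeAlgebra.equivMonoidAlgebraFreeMonoid (FreeAlgebra.ι (ZMod 2) i) by
          simp [FreeAlgebra.equivMonoidAlgebraFreeMonoid]]
      simp [Q]
    rw [hB, h1, ← hs, map_mul, hQ, QI_cons, ← ih, hB]

lemma repr_QI (I : List ℕ) : B.repr (QI I) = Finsupp.single (FreeMonoid.ofList I) 1 := by
  rw [← B_apply, B.repr_self]

lemma ofList_injective : Function.Injective (FreeMonoid.ofList (α := ℕ)) := fun a b h => by
  rw [← FreeMonoid.toList_ofList a, h, FreeMonoid.toList_ofList]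

instance : DecidableEq (FreeMonoid ℕ) := inferInstanceAs (DecidableEq (List ℕ))

def cf (J T : FreeMonoid ℕ) : F0 ⊗[ZMod 2] F0 →ₗ[ZMod 2] ZMod 2 :=
  (TensorProduct.lid (ZMod 2) (ZMod 2)).toLinearMap ∘ₗ
    TensorProduct.map (B.coord J) (B.coord T)

lemma cf_tmul (J T : FreeMonoid ℕ) (a b : F0) :
    cf J T (a ⊗ₜ[ZMod 2] b) = B.repr a J * B.repr b T := by
  simp [cf, Module.Basis.coord, smul_eq_mul]

lemma cf_QI (J T : FreeMonoid ℕ) (A C : List ℕ) :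
    cf J T (QI A ⊗ₜ[ZMod 2] QI C) =
      if FreeMonoid.ofList A = J ∧ FreeMonoid.ofList C = T then 1 else 0 := by
  rw [cf_tmul, repr_QI, repr_QI]
  by_cases h1 : FreeMonoid.ofList A = J <;> by_cases h2 : FreeMonoid.ofList C = T <;>
    simp [h1, h2, Finsupp.single_apply]

lemma addself {M : Type*} [AddCommMonoid M] [Module (ZMod 2) M] (a : M) : a + a = 0 := by
  have h : (2 : ZMod 2) • a = 0 := by
    rw [show (2 : ZMod 2) = 0 from rfl, zero_smul]
  rwa [two_smul] at h

lemma eq_iff_addzero {M : Type*} [AddCommMonoid M] [Module (ZMod 2) M] (a b : M) :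
    a = b ↔ a + b = 0 := by
  constructor
  · rintro rfl; exact addself _
  · intro h
    calc a = a + (b + b) := by rw [addself, add_zero]
      _ = (a + b) + b := (add_assoc a b b).symm
      _ = b := by rw [h, zero_add]

lemma zip_rep0_left (I : List ℕ) :
    List.zipWith (· + ·) (List.replicate I.length 0) I = I := by
  induction I with
  | nil => rfl
  | cons i I ih =>
    show List.zipWith _ (0 :: List.replicate I.length 0) (i :: I) = i :: I
    rw [List.zipWith_cons_cons, ih, Nat.zero_add]

lemma sum_zero_rep (I : List ℕ) (h : I.sum = 0) : I = List.replicate I.length 0 := by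
  induction I with
  | nil => rfl
  | cons i I ih =>
    simp only [List.sum_cons] at h
    have hi : i = 0 := by omega
    have hI : I.sum = 0 := by omega
    subst hi
    rw [List.length_cons, List.replicate_succ]
    exact congrArg (0 :: ·) (ih hI)

lemma sum_ge_two_split (I : List ℕ) (h : 2 ≤ I.sum) :
    ∃ J T : List ℕ, J.length = I.length ∧ T.length = I.length ∧
      J.sum ≠ 0 ∧ T.sum ≠ 0 ∧ I = List.zipWith (· + ·) J T := by
  induction I with
  | nil => simp at h
  | cons i I ih =>
    rcases Nat.eq_zero_or_pos i with hi | hi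
    · subst hi
      simp only [List.sum_cons, Nat.zero_add] at h
      obtain ⟨J, T, h1, h2, h3, h4, h5⟩ := ih h
      exact ⟨0 :: J, 0 :: T, by simp [h1], by simp [h2], by simpa using h3,
        by simpa using h4, by simp [← h5]⟩
    · rcases Nat.eq_zero_or_pos I.sum with hI | hI
      · have h2i : 2 ≤ i := by simp only [List.sum_cons] at h; omega
        refine ⟨1 :: List.replicate I.length 0, (i-1) :: I, by simp, by simp,
          by simp, by simp; omega, ?_⟩
        simp only [List.zipWith_cons_cons, zip_rep0_left]
        congr 1
        omega
      · refine ⟨i :: List.replicate I.length 0, 0 :: I, by simp, by simp,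
          by simp; omega, by simp; omega, ?_⟩
        simp [zip_rep0_left]

lemma sum_eq_one (I : List ℕ) (h : I.sum = 1) :
    ∃ i, 1 ≤ i ∧ i ≤ I.length ∧
      I = List.replicate (I.length - i) 0 ++ 1 :: List.replicate (i - 1) 0 := by
  induction I with
  | nil => simp at h
  | cons j I ih =>
    simp only [List.sum_cons] at h
    rcases Nat.eq_zero_or_pos j with hj | hj
    · subst hj
      obtain ⟨i, h1, h2, h3⟩ := ih (by omega)
      refine ⟨i, h1, by simp; omega, ?_⟩
      have h4 : (0 :: I : List ℕ).length - i = (I.length - i) + 1 := by simp; omega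
      rw [h4, List.replicate_succ, List.cons_append, ← h3]
    · have hj1 : j = 1 := by omega
      have hI : I.sum = 0 := by omega
      refine ⟨I.length + 1, by omega, by simp, ?_⟩
      have : (j :: I).length - (I.length + 1) = 0 := by simp
      rw [this, hj1]
      simp only [List.replicate_zero, List.nil_append, Nat.add_sub_cancel]
      exact congrArg (1 :: ·) (sum_zero_rep I hI)

lemma Fk_eq (k : ℕ) :
    Fk k = Submodule.span (ZMod 2)
      (⇑B '' {m : FreeMonoid ℕ | (FreeMonoid.toList m).length = k}) := by
  unfold Fk
  congr 1
  ext z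
  constructor
  · rintro ⟨I, hI, rfl⟩
    exact ⟨FreeMonoid.ofList I, by simpa [FreeMonoid.toList_ofList] using hI, B_apply I⟩
  · rintro ⟨m, hm, rfl⟩
    exact ⟨FreeMonoid.toList m, hm, by rw [← B_apply, FreeMonoid.ofList_toList]⟩

lemma key {k : ℕ} {z : F0} (hz : z ∈ Fk k)
    (hp : psi z = z ⊗ₜ[ZMod 2] g0 k + g0 k ⊗ₜ[ZMod 2] z)
    (J T : List ℕ) (hJ : J.length = k) (hT : T.length = k) :
    B.repr z (FreeMonoid.ofList (List.zipWith (· + ·) J T)) =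
      (if T = List.replicate k 0 then B.repr z (FreeMonoid.ofList J) else 0) +
      (if J = List.replicate k 0 then B.repr z (FreeMonoid.ofList T) else 0) := by
  classical
  set c := B.repr z with hc
  have hsupp : ∀ m ∈ c.support, (FreeMonoid.toList m).length = k := by
    rw [Fk_eq] at hz
    intro m hm
    exact (Module.Basis.mem_span_image B).mp hz hm
  have hzdec : z = ∑ m ∈ c.support, c m • B m := by
    conv_lhs => rw [← Module.Basis.linearCombination_repr B z]
    rw [Finsupp.linearCombination_apply, Finsupp.sum]
  have hpsiz : psi z = ∑ m ∈ c.support,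
      c m • ∑ p ∈ splits (FreeMonoid.toList m), QI p.1 ⊗ₜ[ZMod 2] QI p.2 := by
    conv_lhs => rw [hzdec]
    rw [map_sum]
    refine Finset.sum_congr rfl fun m hm => ?_
    rw [map_smul, show B m = QI (FreeMonoid.toList m) by
      rw [← B_apply, FreeMonoid.ofList_toList], psi_QI]
  have hL : cf (FreeMonoid.ofList J) (FreeMonoid.ofList T) (psi z)
      = c (FreeMonoid.ofList (List.zipWith (· + ·) J T)) := by
    rw [hpsiz, map_sum]
    have step : ∀ m ∈ c.support,
        cf (FreeMonoid.ofList J) (FreeMonoid.ofList T)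
          (c m • ∑ p ∈ splits (FreeMonoid.toList m), QI p.1 ⊗ₜ[ZMod 2] QI p.2)
        = if m = FreeMonoid.ofList (List.zipWith (· + ·) J T) then c m else 0 := by
      intro m hm
      rw [map_smul, map_sum]
      have hinner : ∀ p ∈ splits (FreeMonoid.toList m),
          cf (FreeMonoid.ofList J) (FreeMonoid.ofList T) (QI p.1 ⊗ₜ[ZMod 2] QI p.2)
          = if p = (J, T) then 1 else 0 := by
        intro p hp
        rw [cf_QI]
        congr 1
        simp only [eq_iff_iff, Prod.ext_iff, ofList_injective.eq_iff]
      rw [Finset.sum_congr rfl hinner,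
        Finset.sum_ite_eq' (splits (FreeMonoid.toList m)) (J, T) (fun _ => (1 : ZMod 2))]
      have hiff : ((J, T) ∈ splits (FreeMonoid.toList m)) ↔
          (m = FreeMonoid.ofList (List.zipWith (· + ·) J T)) := by
        rw [mem_splits, hsupp m hm]
        constructor
        · rintro ⟨-, -, h3⟩
          rw [← FreeMonoid.ofList_toList m, h3]
        · intro h
          have htl : FreeMonoid.toList m = List.zipWith (· + ·) J T := by
            rw [h, FreeMonoid.toList_ofList]
          rw [htl]
          exact ⟨hJ, hT, rfl⟩
      rw [if_congr hiff rfl rfl]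
      by_cases h : m = FreeMonoid.ofList (List.zipWith (· + ·) J T) <;> simp [h]
    rw [Finset.sum_congr rfl step,
      Finset.sum_ite_eq' c.support (FreeMonoid.ofList (List.zipWith (· + ·) J T)) (fun m => c m)]
    by_cases h : FreeMonoid.ofList (List.zipWith (· + ·) J T) ∈ c.support
    · rw [if_pos h]
    · rw [if_neg h, eq_comm]
      exact Finsupp.notMem_support_iff.mp h
  have hg : B.repr (g0 k) = Finsupp.single (FreeMonoid.ofList (List.replicate k 0)) 1 :=
    repr_QI _
  have hR : cf (FreeMonoid.ofList J) (FreeMonoid.ofList T)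
        (z ⊗ₜ[ZMod 2] g0 k + g0 k ⊗ₜ[ZMod 2] z)
      = (if T = List.replicate k 0 then c (FreeMonoid.ofList J) else 0) +
        (if J = List.replicate k 0 then c (FreeMonoid.ofList T) else 0) := by
    rw [map_add, cf_tmul, cf_tmul, hg, Finsupp.single_apply, Finsupp.single_apply]
    congr 1
    · by_cases h : T = List.replicate k 0
      · rw [if_pos h, if_pos (by rw [h]), mul_one]
      · rw [if_neg h, if_neg (fun hc => h (ofList_injective hc).symm), mul_zero]
    · by_cases h : J = List.replicate k 0
      · rw [if_pos h, if_pos (by rw [h]), one_mul]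
      · rw [if_neg h, if_neg (fun hc => h (ofList_injective hc).symm), zero_mul]
  calc c (FreeMonoid.ofList (List.zipWith (· + ·) J T))
      = cf (FreeMonoid.ofList J) (FreeMonoid.ofList T) (psi z) := hL.symm
    _ = _ := by rw [hp, hR]

def Lmap (k : ℕ) : F0 →ₗ[ZMod 2] F0 ⊗[ZMod 2] F0 :=
  psi.toLinearMap + (TensorProduct.mk (ZMod 2) F0 F0).flip (g0 k)
    + TensorProduct.mk (ZMod 2) F0 F0 (g0 k)

lemma Lmap_zero_iff (k : ℕ) (z : F0) :
    Lmap k z = 0 ↔ psi z = z ⊗ₜ[ZMod 2] g0 k + g0 k ⊗ₜ[ZMod 2] z := by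
  have h : Lmap k z = psi z + (z ⊗ₜ[ZMod 2] g0 k + g0 k ⊗ₜ[ZMod 2] z) := by
    simp [Lmap, add_assoc]
  rw [h, ← eq_iff_addzero]

lemma getElem_one (a : ℕ) (r : List ℕ) : (List.replicate a 0 ++ 1 :: r)[a]? = some 1 := by
  rw [List.getElem?_append_right (by simp)]
  simp

lemma getElem_zero (a b : ℕ) (hab : a < b) (s : List ℕ) :
    (List.replicate b 0 ++ s)[a]? = some 0 := by
  rw [List.getElem?_append_left (by simpa using hab)]
  simp [List.getElem?_replicate, hab]

lemma rep_one_inj {a b i j : ℕ}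
    (h : List.replicate a (0:ℕ) ++ 1 :: List.replicate i 0
       = List.replicate b 0 ++ 1 :: List.replicate j 0) : a = b := by
  by_contra hne
  rcases Nat.lt_or_ge a b with hab | hab
  · have h1 := getElem_one a (List.replicate i (0:ℕ))
    rw [h, getElem_zero a b hab] at h1
    simp at h1
  · have hba : b < a := by omega
    have h1 := getElem_one b (List.replicate j (0:ℕ))
    rw [← h, getElem_zero b a hba] at h1
    simp at h1

/-- Each `x_{k,i}` (for `1 ≤ i ≤ k`) is primitive in the component `F₀[k]` with grouplike
`(Q^0)^k`, and `{x_{k,i} : 1 ≤ i ≤ k}` is an `𝔽₂`-basis for the primitive elements of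
`F₀[k]`. -/
theorem x_primitive_basis (k : ℕ) (hk : 1 ≤ k) :
    (∀ i, 1 ≤ i → i ≤ k →
        psi (x k i) = x k i ⊗ₜ[ZMod 2] g0 k + g0 k ⊗ₜ[ZMod 2] x k i) ∧
    LinearIndependent (ZMod 2) (fun i : Fin k => x k (i.1 + 1)) ∧
    (Submodule.span (ZMod 2) (Set.range fun i : Fin k => x k (i.1 + 1)) : Set F0) =
      {z | z ∈ Fk k ∧ psi z = z ⊗ₜ[ZMod 2] g0 k + g0 k ⊗ₜ[ZMod 2] z} := by
  classical
  refine ⟨fun i h1 h2 => part1 k i h1 h2, ?_, ?_⟩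
  · have heq : (fun i : Fin k => x k (i.1 + 1)) = ⇑B ∘ (fun i : Fin k =>
        FreeMonoid.ofList (List.replicate (k - (i.1+1)) 0 ++ 1 :: List.replicate i.1 0)) := by
      funext i
      have : (i.1 + 1) - 1 = i.1 := by omega
      simp only [Function.comp_apply, B_apply, x, this]
    rw [heq]
    refine B.linearIndependent.comp _ ?_
    intro i j h
    have h2 := ofList_injective h
    have h3 := rep_one_inj h2
    have hi := i.2
    have hj := j.2
    exact Fin.ext (by omega)
  · ext z
    simp only [SetLike.mem_coe, Set.mem_setOf_eq]
    constructor
    · intro hz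
      have hle : Submodule.span (ZMod 2) (Set.range fun i : Fin k => x k (i.1 + 1)) ≤
          Fk k ⊓ LinearMap.ker (Lmap k) := by
        rw [Submodule.span_le]
        rintro - ⟨i, rfl⟩
        have hik := i.2
        constructor
        · apply Submodule.subset_span
          refine ⟨List.replicate (k - (i.1+1)) 0 ++ 1 :: List.replicate ((i.1+1) - 1) 0,
            ?_, rfl⟩
          simp only [List.length_append, List.length_replicate, List.length_cons]
          omega
        · rw [SetLike.mem_coe, LinearMap.mem_ker, Lmap_zero_iff]
          exact part1 k (i.1 + 1) (by omega) (by omega)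
      obtain ⟨hm1, hm2⟩ := hle hz
      exact ⟨hm1, (Lmap_zero_iff k z).mp hm2⟩
    · rintro ⟨hmem, hp⟩
      have hsupp : ∀ m ∈ (B.repr z).support, (FreeMonoid.toList m).length = k := by
        rw [Fk_eq] at hmem
        intro m hm
        exact (Module.Basis.mem_span_image B).mp hmem hm
      have hzdec : z = ∑ m ∈ (B.repr z).support, B.repr z m • B m := by
        conv_lhs => rw [← Module.Basis.linearCombination_repr B z]
        rw [Finsupp.linearCombination_apply, Finsupp.sum]
      rw [hzdec]
      apply Submodule.sum_mem
      intro m hm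
      apply Submodule.smul_mem
      apply Submodule.subset_span
      have hlen := hsupp m hm
      have hcm : B.repr z m ≠ 0 := Finsupp.mem_support_iff.mp hm
      have hsum : (FreeMonoid.toList m).sum = 1 := by
        by_contra hne
        rcases Nat.lt_or_ge (FreeMonoid.toList m).sum 2 with hlt | hge
        · have h0 : (FreeMonoid.toList m).sum = 0 := by omega
          have hm0 : m = FreeMonoid.ofList (List.replicate k 0) := by
            conv_lhs => rw [← FreeMonoid.ofList_toList m]
            rw [sum_zero_rep _ h0, hlen]
          have hkey := key hmem hp (List.replicate k 0) (List.replicate k 0)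
            (by simp) (by simp)
          rw [if_pos rfl] at hkey
          have hzz : List.zipWith (· + ·) (List.replicate k 0) (List.replicate k 0)
              = List.replicate k 0 := by
            have h := zip_rep0_left (List.replicate k (0:ℕ))
            rwa [List.length_replicate] at h
          rw [hzz, addself] at hkey
          exact hcm (by rw [hm0]; exact hkey)
        · obtain ⟨J, T, hJ, hT, hJs, hTs, hzip⟩ := sum_ge_two_split _ hge
          have hT0 : T ≠ List.replicate k 0 := fun h => hTs (by rw [h]; simp)
          have hJ0 : J ≠ List.replicate k 0 := fun h => hJs (by rw [h]; simp)
          have hkey := key hmem hp J T (by rw [hJ, hlen]) (by rw [hT, hlen])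
          rw [if_neg hT0, if_neg hJ0, add_zero] at hkey
          have hmz : m = FreeMonoid.ofList (List.zipWith (· + ·) J T) := by
            rw [← hzip, FreeMonoid.ofList_toList]
          exact hcm (by rw [hmz]; exact hkey)
      obtain ⟨i, hi1, hi2, hi3⟩ := sum_eq_one _ hsum
      rw [hlen] at hi2 hi3
      refine ⟨⟨i - 1, by omega⟩, ?_⟩
      show x k ((i - 1) + 1) = B m
      have hii : (i - 1) + 1 = i := by omega
      rw [hii]
      calc x k i = QI (FreeMonoid.toList m) := by rw [x, hi3]
        _ = B m := by rw [← B_apply, FreeMonoid.ofList_toList]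

end
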